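/- Let X be a complete metric space, f: X → ℝ∪{+∞} lower semicontinuous, x̄ ∈ [f≤0], τ > 0, δ ∈ ]0,+∞], μ ∈ ]0,+∞], and α ∈ ]0,1]. If α·|∇f|⋄(u) ≥ τ for all u ∈ B_δ(x̄) with 0 < f(u) < μ satisfying max{α,1-α}·f(u) < τ·d(u,[f≤0]), then τ·d(x,[f≤0]) ≤ f(x) for all x ∈ B_{δ/(1+α)}(x̄) with 0 < f(x) < μ. -/

import Mathlib

open Filter EMetric Set Topology
open scoped ENNReal NNReal

noncomputable def epos (a : EReal) : ℝ≥0∞ := if a = ⊤ then ⊤ else ENNReal.ofReal a.toReal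

noncomputable def nslope {X : Type*} [MetricSpace X] (f : X → EReal) (x : X) : ℝ≥0∞ :=
  ⨆ u ∈ {u : X | u ≠ x}, epos (f x - max (f u) 0) / edist u x

noncomputable def lslope {X : Type*} [MetricSpace X] (f : X → EReal) (x : X) : ℝ≥0∞ :=
  Filter.limsup (fun u => epos (f x - f u) / edist u x) (𝓝[≠] x)

lemma epos_coe (r : ℝ) : epos (r : EReal) = ENNReal.ofReal r := by
  simp [epos]

lemma ofReal_le_epos {r : ℝ} {a : EReal} (h : (r : EReal) ≤ a) :
    ENNReal.ofReal r ≤ epos a := by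
  by_cases hT : a = ⊤
  · simp [epos, hT]
  · have hB : a ≠ ⊥ := by
      rintro rfl
      exact absurd h (by simp)
    rw [← EReal.coe_toReal hT hB, EReal.coe_le_coe_iff] at h
    simp only [epos, hT, if_false]
    exact ENNReal.ofReal_le_ofReal h

lemma lsc_epos {X : Type*} [TopologicalSpace X] {f : X → EReal}
    (hlsc : LowerSemicontinuous f) : LowerSemicontinuous fun v => epos (f v) := by
  intro v0 y hy
  have hyT : y ≠ ⊤ := (hy.trans_le le_top).ne
  obtain ⟨r, hyr, hrf⟩ : ∃ r : ℝ, y < ENNReal.ofReal r ∧ (r : EReal) < f v0 := by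
    by_cases hT : f v0 = ⊤
    · refine ⟨y.toReal + 1, ?_, by rw [hT]; exact EReal.coe_lt_top _⟩
      rw [ENNReal.lt_ofReal_iff_toReal_lt hyT]
      linarith
    · have hv0 : epos (f v0) = ENNReal.ofReal (f v0).toReal := by simp [epos, hT]
      have hy' : y < ENNReal.ofReal (f v0).toReal := by rw [← hv0]; exact hy
      set t := (f v0).toReal with ht
      have htpos : 0 < t := by
        by_contra hle
        push_neg at hle
        rw [ENNReal.ofReal_eq_zero.2 hle] at hy'
        exact absurd hy' (by simp)
      have hB : f v0 ≠ ⊥ := by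
        intro hb
        rw [ht, hb] at htpos; simp at htpos
      have hyt : y.toReal < t := (ENNReal.lt_ofReal_iff_toReal_lt hyT).1 hy'
      have hy0 : (0:ℝ) ≤ y.toReal := ENNReal.toReal_nonneg
      refine ⟨(y.toReal + t) / 2, ?_, ?_⟩
      · rw [ENNReal.lt_ofReal_iff_toReal_lt hyT]; linarith
      · rw [← EReal.coe_toReal hT hB, EReal.coe_lt_coe_iff, ← ht]; linarith
  filter_upwards [hlsc v0 (r : EReal) hrf] with u hu
  exact hyr.trans_le (ofReal_le_epos hu.le)

/-- Ekeland's variational principle for `ℝ≥0∞`-valued lower semicontinuous functions. -/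
lemma ekeland_enn {X : Type*} [MetricSpace X] [CompleteSpace X] (F : X → ℝ≥0∞)
    (hF : LowerSemicontinuous F) (x : X) (hx : F x ≠ ⊤) (c : ℝ≥0∞) (hc0 : c ≠ 0)
    (hct : c ≠ ⊤) :
    ∃ u : X, (F u + c * edist u x ≤ F x) ∧ ∀ v, v ≠ u → F u < F v + c * edist v u := by
  set T : X → Set X := fun w => {v | F v + c * edist v w ≤ F w} with hT
  have hmem : ∀ w, w ∈ T w := fun w => by simp [hT]
  have htrans : ∀ {v w z : X}, v ∈ T w → w ∈ T z → v ∈ T z := by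
    intro v w z hv hw
    have h1 : F v + c * edist v z ≤ (F v + c * edist v w) + c * edist w z := by
      rw [add_assoc, ← mul_add]
      gcongr
      exact edist_triangle v w z
    exact h1.trans (le_trans (add_le_add_left hv _) hw)
  have hFle : ∀ {v w : X}, v ∈ T w → F v ≤ F w := fun hv => le_trans le_self_add hv
  have hclosed : ∀ w, IsClosed (T w) := by
    intro w
    have hcont : Continuous fun v : X => c * edist v w :=
      (ENNReal.continuous_const_mul hct).comp (continuous_id.edist continuous_const)
    have hlsc : LowerSemicontinuous fun v => F v + c * edist v w :=
      hF.add hcont.lowerSemicontinuous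
    exact hlsc.isClosed_preimage (F w)
  -- choice step
  have hstep : ∀ (w : X) (n : ℕ), ∃ w', w' ∈ T w ∧
      ∀ v ∈ T w, F w' ≤ F v + (2 : ℝ≥0∞)⁻¹ ^ n := by
    intro w n
    have hp : ((2 : ℝ≥0∞)⁻¹ ^ n) ≠ 0 := by
      apply pow_ne_zero; simp
    by_cases hI : (⨅ v ∈ T w, F v) = ⊤
    · refine ⟨w, hmem w, fun v hv => ?_⟩
      have hvT : F v = ⊤ := top_le_iff.1 (hI ▸ iInf₂_le v hv)
      rw [hvT]
      simp
    · have hlt : (⨅ v ∈ T w, F v) < (⨅ v ∈ T w, F v) + (2 : ℝ≥0∞)⁻¹ ^ n :=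
        ENNReal.lt_add_right hI hp
      obtain ⟨w', hw', hFw'⟩ : ∃ w' ∈ T w, F w' < (⨅ v ∈ T w, F v) + (2 : ℝ≥0∞)⁻¹ ^ n := by
        simpa [iInf_lt_iff] using hlt
      exact ⟨w', hw', fun v hv => hFw'.le.trans (add_le_add_left (iInf₂_le v hv) _)⟩
  let u : ℕ → X := fun n => Nat.rec x (fun n ih => (hstep ih n).choose) n
  have hu0 : u 0 = x := rfl
  have huS : ∀ n, u (n + 1) ∈ T (u n) := fun n => (hstep (u n) n).choose_spec.1
  have huB : ∀ n, ∀ v ∈ T (u n), F (u (n + 1)) ≤ F v + (2 : ℝ≥0∞)⁻¹ ^ n :=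
    fun n => (hstep (u n) n).choose_spec.2
  have huT : ∀ n m, n ≤ m → u m ∈ T (u n) := by
    intro n m hnm
    induction m, hnm using Nat.le_induction with
    | base => exact hmem _
    | succ m hm ih => exact htrans (huS m) ih
  have huTop : ∀ n, F (u n) ≠ ⊤ := by
    intro n
    exact ne_top_of_le_ne_top hx (hFle (huT 0 n n.zero_le))
  have key : ∀ n, ∀ v ∈ T (u (n + 1)), c * edist v (u (n + 1)) ≤ (2 : ℝ≥0∞)⁻¹ ^ n := by
    intro n v hv
    have h1 : F v + c * edist v (u (n + 1)) ≤ F (u (n + 1)) := hv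
    have h2 : F (u (n + 1)) ≤ F v + (2 : ℝ≥0∞)⁻¹ ^ n := huB n v (htrans hv (huS n))
    have hvt : F v ≠ ⊤ := ne_top_of_le_ne_top (huTop (n + 1)) (hFle hv)
    have h3 := h1.trans h2
    rwa [ENNReal.add_le_add_iff_left hvt] at h3
  have keyd : ∀ n, ∀ v ∈ T (u (n + 1)), edist v (u (n + 1)) ≤ (2 : ℝ≥0∞)⁻¹ ^ n / c := by
    intro n v hv
    rw [ENNReal.le_div_iff_mul_le (Or.inl hc0) (Or.inl hct), mul_comm]
    exact key n v hv
  have hCauchy : CauchySeq u := by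
    refine cauchySeq_of_edist_le_geometric 2⁻¹ ((F x + 2) / c) ?_ ?_ ?_
    · simp [ENNReal.inv_lt_one]
    · exact (ENNReal.div_lt_top (by simp [hx, ENNReal.add_ne_top]) hc0).ne
    · intro n
      match n with
      | 0 =>
        have h1 : F (u 1) + c * edist (u 1) x ≤ F x := huS 0
        have h2 : c * edist (u 1) x ≤ F x := le_trans le_add_self h1
        have h3 : edist (u 1) x ≤ F x / c := by
          rw [ENNReal.le_div_iff_mul_le (Or.inl hc0) (Or.inl hct), mul_comm]
          exact h2
        calc edist (u 0) (u 1) = edist (u 1) x := by rw [hu0, edist_comm]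
          _ ≤ F x / c := h3
          _ ≤ (F x + 2) / c * 2⁻¹ ^ 0 := by
              rw [pow_zero, mul_one]
              exact ENNReal.div_le_div_right (le_self_add) c
      | (m + 1) =>
        have h1 : edist (u (m + 2)) (u (m + 1)) ≤ (2 : ℝ≥0∞)⁻¹ ^ m / c :=
          keyd m _ (huS (m + 1))
        calc edist (u (m + 1)) (u (m + 2)) = edist (u (m + 2)) (u (m + 1)) := edist_comm _ _
          _ ≤ (2 : ℝ≥0∞)⁻¹ ^ m / c := h1
          _ ≤ (F x + 2) / c * 2⁻¹ ^ (m + 1) := by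
              rw [ENNReal.div_le_iff_le_mul (Or.inl hc0) (Or.inl hct)]
              have hc1 : (F x + 2) / c * 2⁻¹ ^ (m + 1) * c = (F x + 2) * 2⁻¹ ^ (m + 1) := by
                rw [div_eq_mul_inv, mul_right_comm (F x + 2) c⁻¹ ((2 : ℝ≥0∞)⁻¹ ^ (m + 1)),
                  mul_assoc, ENNReal.inv_mul_cancel hc0 hct, mul_one]
              rw [hc1]
              calc (2 : ℝ≥0∞)⁻¹ ^ m = 1 * 2⁻¹ ^ m := (one_mul _).symm
                _ = (2 * 2⁻¹) * 2⁻¹ ^ m := by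
                    rw [ENNReal.mul_inv_cancel (by norm_num) (by norm_num)]
                _ = 2 * 2⁻¹ ^ (m + 1) := by ring
                _ ≤ (F x + 2) * 2⁻¹ ^ (m + 1) := by gcongr; exact le_add_self
  obtain ⟨p, hp⟩ := cauchySeq_tendsto_of_complete hCauchy
  have hpT : ∀ n, p ∈ T (u n) := by
    intro n
    refine (hclosed (u n)).mem_of_tendsto hp ?_
    exact eventually_atTop.2 ⟨n, fun m hm => huT n m hm⟩
  refine ⟨p, hpT 0, ?_⟩
  intro v hv
  by_contra hcon
  push_neg at hcon
  have hvTp : v ∈ T p := hcon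
  have hvT : ∀ n, v ∈ T (u n) := fun n => htrans hvTp (hpT n)
  have hb : ∀ n, edist v p ≤ (2 : ℝ≥0∞)⁻¹ ^ n / c + edist (u (n + 1)) p := by
    intro n
    exact (edist_triangle v (u (n + 1)) p).trans
      (add_le_add_left (keyd n v (hvT (n + 1))) _)
  have h0 : Tendsto (fun n : ℕ => (2 : ℝ≥0∞)⁻¹ ^ n / c + edist (u (n + 1)) p)
      atTop (𝓝 0) := by
    have t1 : Tendsto (fun n : ℕ => (2 : ℝ≥0∞)⁻¹ ^ n / c) atTop (𝓝 0) := by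
      simp only [div_eq_mul_inv]
      have hpow := ENNReal.Tendsto.mul_const
        (ENNReal.tendsto_pow_atTop_nhds_zero_of_lt_one
          (by simp [ENNReal.inv_lt_one] : (2 : ℝ≥0∞)⁻¹ < 1))
        (Or.inr (ENNReal.inv_ne_top.2 hc0))
      simpa using hpow
    have t2 : Tendsto (fun n : ℕ => edist (u (n + 1)) p) atTop (𝓝 0) := by
      have := (hp.comp (tendsto_add_atTop_nat 1)).edist (tendsto_const_nhds (x := p))
      simpa using this
    simpa using t1.add t2
  have hle : edist v p ≤ 0 := ge_of_tendsto h0 (Eventually.of_forall hb)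
  exact hv (edist_le_zero.1 hle)

/-- Theorem 2.2(i) with the nonlocal lslope: the sufficient lslope condition on
`B_δ(x̄) ∩ [0<f<μ]` yields the `τ`-error bound on `B_{δ/(1+α)}(x̄) ∩ [0<f<μ]`. -/
theorem error_bound_on_ball {X : Type*} [MetricSpace X] [CompleteSpace X]
    (f : X → EReal) (hbot : ∀ u, f u ≠ ⊥) (hlsc : LowerSemicontinuous f)
    (xb : X) (hxb : f xb ≤ 0) (τ α : ℝ) (hτ : 0 < τ) (hα : α ∈ Set.Ioc (0 : ℝ) 1)
    (δ μ : ℝ≥0∞) (hδ : 0 < δ) (hμ : 0 < μ)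
    (h : ∀ u ∈ EMetric.ball xb δ, 0 < f u → f u < (μ : EReal) →
      (max α (1 - α) : EReal) * f u <
        ((ENNReal.ofReal τ * EMetric.infEdist u {v | f v ≤ 0} : ℝ≥0∞) : EReal) →
      ENNReal.ofReal τ ≤ ENNReal.ofReal α * nslope f u) :
    ∀ x ∈ EMetric.ball xb (δ / ENNReal.ofReal (1 + α)), 0 < f x → f x < (μ : EReal) →
      ((ENNReal.ofReal τ * EMetric.infEdist x {v | f v ≤ 0} : ℝ≥0∞) : EReal) ≤ f x := by
  intro x hxball hfx0 hfxμ
  by_contra hcon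
  push_neg at hcon
  set S : Set X := {v | f v ≤ 0} with hS
  have hxbS : xb ∈ S := hxb
  have hedist_lt : edist x xb < δ / ENNReal.ofReal (1 + α) := mem_ball.1 hxball
  have hebt : edist x xb ≠ ⊤ := edist_ne_top x xb
  set d : ℝ≥0∞ := infEdist x S with hd
  have hdle : d ≤ edist x xb := infEdist_le_edist_of_mem hxbS
  have hdt : d ≠ ⊤ := ne_top_of_le_ne_top hebt hdle
  -- f x is a positive real ε
  have hfxT : f x ≠ ⊤ := (hfxμ.trans_le le_top).ne
  set ε : ℝ := (f x).toReal with hε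
  have hfxε : f x = (ε : EReal) := (EReal.coe_toReal hfxT (hbot x)).symm
  have hεpos : 0 < ε := by
    rw [hfxε] at hfx0; exact_mod_cast hfx0
  set D : ℝ := d.toReal with hD
  have hdD : d = ENNReal.ofReal D := (ENNReal.ofReal_toReal hdt).symm
  set b : ℝ := (edist x xb).toReal with hb
  have heb : edist x xb = ENNReal.ofReal b := (ENNReal.ofReal_toReal hebt).symm
  have hDb : D ≤ b := ENNReal.toReal_mono hebt hdle
  -- from the contradiction hypothesis : ε < τ * D
  have hετD : ε < τ * D := by
    rw [hfxε, hdD, ← ENNReal.ofReal_mul hτ.le, EReal.coe_ennreal_ofReal] at hcon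
    have := EReal.coe_lt_coe_iff.1 hcon
    rcases le_or_gt (τ * D) 0 with h0 | h0
    · rw [max_eq_right h0] at this; linarith
    · rwa [max_eq_left h0.le] at this
  have hα0 := hα.1
  have hα1 := hα.2
  have hDpos : 0 < D := by nlinarith
  have hbpos : 0 < b := lt_of_lt_of_le hDpos hDb
  -- choose λ
  have h1 : ENNReal.ofReal (α * ε / τ) < d := by
    rw [hdD, ENNReal.ofReal_lt_ofReal_iff hDpos]
    rw [div_lt_iff₀ hτ]
    nlinarith
  have h2 : edist x xb + ENNReal.ofReal (α * ε / τ) < δ := by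
    have hεb : α * ε / τ < α * b := by
      rw [div_lt_iff₀ hτ]
      nlinarith [mul_nonneg (mul_nonneg hα0.le hτ.le) (sub_nonneg.2 hDb),
        mul_lt_mul_of_pos_left hετD hα0]
    calc edist x xb + ENNReal.ofReal (α * ε / τ)
        ≤ ENNReal.ofReal b + ENNReal.ofReal (α * b) := by
          rw [heb]
          exact add_le_add_right (ENNReal.ofReal_le_ofReal hεb.le) _
      _ = ENNReal.ofReal ((1 + α) * b) := by
          rw [← ENNReal.ofReal_add hbpos.le (by positivity)]; ring_nf
      _ = ENNReal.ofReal (1 + α) * edist x xb := by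
          rw [ENNReal.ofReal_mul (by linarith), heb]
      _ < ENNReal.ofReal (1 + α) * (δ / ENNReal.ofReal (1 + α)) := by
          rw [ENNReal.mul_lt_mul_iff_right (by simp [ENNReal.ofReal_pos]; linarith)
            ENNReal.ofReal_ne_top]
          exact hedist_lt
      _ ≤ δ := ENNReal.mul_div_le
  have h2' : ENNReal.ofReal (α * ε / τ) < δ - edist x xb :=
    (ENNReal.cancel_of_ne hebt).lt_tsub_iff_left.2 h2
  obtain ⟨z, hz1, hz2⟩ := exists_between (lt_min h1 h2')
  have hzd : z < d := hz2.trans_le (min_le_left _ _)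
  have hzδ : z < δ - edist x xb := hz2.trans_le (min_le_right _ _)
  have hzt : z ≠ ⊤ := (hzd.trans_le le_top).ne
  set lam : ℝ := z.toReal with hlam
  have hzlam : z = ENNReal.ofReal lam := (ENNReal.ofReal_toReal hzt).symm
  have hlamgt : α * ε / τ < lam := by
    rw [hzlam, ENNReal.ofReal_lt_ofReal_iff_of_nonneg (by positivity)] at hz1
    exact hz1
  have hlampos : 0 < lam := lt_of_le_of_lt (by positivity) hlamgt
  have hlamD : lam < D := by
    rw [hzlam, hdD, ENNReal.ofReal_lt_ofReal_iff_of_nonneg hlampos.le] at hzd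
    exact hzd
  -- Ekeland
  set F : X → ℝ≥0∞ := fun v => epos (f v) with hF
  have hFlsc : LowerSemicontinuous F := lsc_epos hlsc
  have hFx : F x = ENNReal.ofReal ε := by rw [hF]; simp only; rw [hfxε, epos_coe]
  have hFxt : F x ≠ ⊤ := by rw [hFx]; exact ENNReal.ofReal_ne_top
  set c : ℝ≥0∞ := ENNReal.ofReal (ε / lam) with hc
  have hc0 : c ≠ 0 := by
    rw [hc]; simp [ENNReal.ofReal_eq_zero]; positivity
  have hct : c ≠ ⊤ := ENNReal.ofReal_ne_top
  obtain ⟨u, hu1, hu2⟩ := ekeland_enn F hFlsc x hFxt c hc0 hct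
  have hcz : c * z = ENNReal.ofReal ε := by
    rw [hc, hzlam, ← ENNReal.ofReal_mul (by positivity)]
    congr 1
    field_simp
  have hcedist : c * edist u x ≤ F x := le_trans le_add_self hu1
  have hedistz : edist u x ≤ z := by
    have : c * edist u x ≤ c * z := by rw [hcz, ← hFx]; exact hcedist
    exact (ENNReal.mul_le_mul_iff_right hc0 hct).1 this
  have hFu : F u ≤ F x := le_trans le_self_add hu1
  have hfuT : f u ≠ ⊤ := by
    intro hT
    have : F u = ⊤ := by rw [hF]; simp [hT, epos]
    rw [this, hFx] at hFu
    exact ENNReal.ofReal_ne_top (top_le_iff.1 hFu)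
  have hfu0 : 0 < f u := by
    by_contra hle
    push_neg at hle
    have huS : u ∈ S := hle
    have : d ≤ edist x u := infEdist_le_edist_of_mem huS
    rw [edist_comm] at this
    exact absurd (this.trans hedistz) (not_le.2 hzd)
  set εu : ℝ := (f u).toReal with hεu
  have hfuεu : f u = (εu : EReal) := (EReal.coe_toReal hfuT (hbot u)).symm
  have hεupos : 0 < εu := by rw [hfuεu] at hfu0; exact_mod_cast hfu0
  have hFuεu : F u = ENNReal.ofReal εu := by rw [hF]; simp only; rw [hfuεu, epos_coe]
  have hεuε : εu ≤ ε := by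
    rw [hFuεu, hFx, ENNReal.ofReal_le_ofReal_iff hεpos.le] at hFu
    exact hFu
  -- u ∈ ball xb δ
  have huball : u ∈ EMetric.ball xb δ := by
    apply mem_ball.2
    calc edist u xb ≤ edist u x + edist x xb := edist_triangle u x xb
      _ ≤ z + edist x xb := by gcongr
      _ < δ := by
          rw [add_comm]
          exact (ENNReal.cancel_of_ne hebt).lt_tsub_iff_left.1 hzδ
  have hfuμ : f u < (μ : EReal) := by
    calc f u = (εu : EReal) := hfuεu
      _ ≤ (ε : EReal) := EReal.coe_le_coe_iff.2 hεuε
      _ = f x := hfxε.symm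
      _ < (μ : EReal) := hfxμ
  -- refined distance bound
  -- refined distance bound
  set q : ℝ := (ε - εu) * lam / ε with hq
  have hqnonneg : 0 ≤ q := by
    apply div_nonneg _ hεpos.le
    exact mul_nonneg (by linarith) hlampos.le
  have hedistq : edist u x ≤ ENNReal.ofReal q := by
    have hsub : c * edist u x ≤ ENNReal.ofReal (ε - εu) := by
      have h1 : c * edist u x ≤ F x - F u :=
        (ENNReal.cancel_of_ne (by rw [hFuεu]; exact ENNReal.ofReal_ne_top)).le_tsub_of_add_le_left
          hu1
      rwa [hFx, hFuεu, ← ENNReal.ofReal_sub _ hεupos.le] at h1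
    have hceq : c * ENNReal.ofReal q = ENNReal.ofReal (ε - εu) := by
      rw [hc, ← ENNReal.ofReal_mul (by positivity)]
      congr 1
      rw [hq]
      field_simp
    exact (ENNReal.mul_le_mul_iff_right hc0 hct).1 (by rw [hceq]; exact hsub)
  -- lower bound on infEdist u S
  have hinf : ENNReal.ofReal (D - q) ≤ infEdist u S := by
    have htri : d ≤ infEdist u S + edist x u := infEdist_le_infEdist_add_edist
    have hmain : d - edist x u ≤ infEdist u S := tsub_le_iff_right.2 htri
    refine le_trans ?_ hmain
    rw [hdD, edist_comm x u]
    calc ENNReal.ofReal (D - q) = ENNReal.ofReal D - ENNReal.ofReal q :=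
          ENNReal.ofReal_sub D hqnonneg
      _ ≤ ENNReal.ofReal D - edist u x := tsub_le_tsub_left hedistq _
  -- premise of h at u
  have hm : max α (1 - α) ≤ 1 := max_le hα1 (by linarith)
  have hreal : max α (1 - α) * εu < τ * (D - q) := by
    have hqε : q * ε = (ε - εu) * lam := by rw [hq]; field_simp
    nlinarith [mul_nonneg (mul_nonneg (sub_nonneg.2 hεuε) hτ.le) (sub_nonneg.2 hlamD.le),
      mul_pos hεupos (sub_pos.2 hετD),
      mul_nonneg (mul_nonneg (sub_nonneg.2 hm) hεupos.le) hεpos.le]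
  have hmaxE : (max α (1 - α) : EReal) = ((max α (1 - α) : ℝ) : EReal) := by
    rw [EReal.coe_strictMono.monotone.map_max]
    norm_num
  have hpremise : (max α (1 - α) : EReal) * f u <
      ((ENNReal.ofReal τ * EMetric.infEdist u {v | f v ≤ 0} : ℝ≥0∞) : EReal) := by
    rw [hmaxE, hfuεu]
    calc ((max α (1 - α) : ℝ) : EReal) * ((εu : ℝ) : EReal)
        = ((max α (1 - α) * εu : ℝ) : EReal) := by rw [← EReal.coe_mul]
      _ < ((τ * (D - q) : ℝ) : EReal) := EReal.coe_lt_coe_iff.2 hreal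
      _ ≤ ((ENNReal.ofReal (τ * (D - q)) : ℝ≥0∞) : EReal) := by
          rw [EReal.coe_ennreal_ofReal]
          exact_mod_cast le_max_left _ _
      _ ≤ ((ENNReal.ofReal τ * EMetric.infEdist u {v | f v ≤ 0} : ℝ≥0∞) : EReal) := by
          rw [EReal.coe_ennreal_le_coe_ennreal_iff]
          rw [ENNReal.ofReal_mul hτ.le]
          exact mul_le_mul_right hinf _
  have hfinal := h u huball hfu0 hfuμ hpremise
  -- nslope bound from Ekeland minimality
  have hnslope : nslope f u ≤ c := by
    rw [nslope]
    refine iSup₂_le fun v hv => ?_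
    have hvne : v ≠ u := hv
    have he0 : edist v u ≠ 0 := by
      simp only [ne_eq, edist_eq_zero]
      exact hvne
    have het : edist v u ≠ ⊤ := edist_ne_top v u
    rw [ENNReal.div_le_iff_le_mul (Or.inl he0) (Or.inl het)]
    have hek := hu2 v hvne
    by_cases hvT : f v = ⊤
    · have hbotdiff : f u - max (f v) 0 = ⊥ := by
        rw [hvT, hfuεu]
        simp
      rw [hbotdiff]
      simp [epos]
    · set wr : ℝ := max (f v).toReal 0 with hwr
      have hw : max (f v) 0 = ((wr : ℝ) : EReal) := by
        by_cases hvB : f v = ⊥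
        · rw [hvB, hwr, hvB]
          simp
        · rw [hwr, ← EReal.coe_toReal hvT hvB, EReal.coe_strictMono.monotone.map_max]
          norm_num
      have hFv : F v = ENNReal.ofReal wr := by
        rw [hF]
        simp only [epos, hvT, if_false]
        rcases le_total (f v).toReal 0 with h0 | h0
        · rw [hwr, max_eq_right h0, ENNReal.ofReal_eq_zero.2 h0, ENNReal.ofReal_zero]
        · rw [hwr, max_eq_left h0]
      have hdiff : f u - max (f v) 0 = ((εu - wr : ℝ) : EReal) := by
        rw [hfuεu, hw, ← EReal.coe_sub]
      rw [hdiff, epos_coe]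
      rw [hFuεu, hFv] at hek
      have hle2 : ENNReal.ofReal εu ≤ c * edist v u + ENNReal.ofReal wr := by
        rw [add_comm]
        exact hek.le
      rw [ENNReal.ofReal_sub _ (le_max_right _ _)]
      exact tsub_le_iff_right.2 hle2
  -- final contradiction
  have hlast : ENNReal.ofReal α * c < ENNReal.ofReal τ := by
    rw [hc, ← ENNReal.ofReal_mul hα0.le, ENNReal.ofReal_lt_ofReal_iff hτ, mul_div_assoc',
      div_lt_iff₀ hlampos]
    have hmul : α * ε < τ * lam := by
      have h2 := (div_lt_iff₀ hτ).1 hlamgt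
      linarith
    linarith
  have hcontr : ENNReal.ofReal τ < ENNReal.ofReal τ :=
    lt_of_le_of_lt (hfinal.trans (mul_le_mul_right hnslope _)) hlast
  exact lt_irrefl _ hcontr
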